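/- With noise Δ ≥ 0, the 2-item identification test success probability equals (2 - (1-Δ)⟨b(ε)⟩)/(2 + 2Δ). In particular it is decreasing in Δ for fixed ⟨b(ε)⟩ < 1, and decreasing in ⟨b(ε)⟩ for fixed Δ < 1. -/

import Mathlib

open MeasureTheory Metric

/-- `f` is absolutely continuous on the interval `[c, d]`. -/
def AbsolutelyContinuousOnIcc (f : ℝ → ℝ) (c d : ℝ) : Prop :=
  ∀ ε > 0, ∃ δ > 0, ∀ (m : ℕ) (a b : Fin m → ℝ),
    (∀ i, c ≤ a i ∧ a i ≤ b i ∧ b i ≤ d) →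
    (∀ i j, i ≠ j → Set.Ioo (a i) (b i) ∩ Set.Ioo (a j) (b j) = ∅) →
    (∑ i, (b i - a i)) < δ → (∑ i, |f (b i) - f (a i)|) < ε

/-- The constant similarity function with resolution `ε` and noise `Δ`. -/
noncomputable def gnoise {M : Type*} [MetricSpace M] (ε Δ : ℝ) (x y : M) : ℝ :=
  if dist x y ≤ ε then 1 else Δ

/-- Probability of correctly identifying the probe when the probe is the first item. -/
noncomputable def idDec {M : Type*} [MetricSpace M] (ε Δ : ℝ) (x₁ x₂ : M) : ℝ :=
  gnoise ε Δ x₁ x₁ / (gnoise ε Δ x₁ x₁ + gnoise ε Δ x₂ x₁)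

/-- Identification-test success probability given the two sampled items:
the probe equals `x₁` or `x₂`, each with probability `1/2`. -/
noncomputable def idSucc {M : Type*} [MetricSpace M] (ε Δ : ℝ) (x₁ x₂ : M) : ℝ :=
  1/2 * idDec ε Δ x₁ x₂ + 1/2 * idDec ε Δ x₂ x₁

lemma idSucc_eq_aux {M : Type*} [MetricSpace M] (ε Δ : ℝ) (hε : 0 ≤ ε) (hΔ : 0 ≤ Δ)
    (x₁ x₂ : M) :
    idSucc ε Δ x₁ x₂ = 1/(1+Δ) +
      (1/2 - 1/(1+Δ)) * (closedBall x₁ ε).indicator (fun _ => (1:ℝ)) x₂ := by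
  have h1Δ : (1:ℝ) + Δ ≠ 0 := by positivity
  unfold idSucc idDec gnoise
  simp only [dist_self, if_pos hε, dist_comm x₂ x₁]
  by_cases h : dist x₁ x₂ ≤ ε
  · have hmem : x₂ ∈ closedBall x₁ ε := by rwa [mem_closedBall, dist_comm]
    rw [Set.indicator_of_mem hmem, if_pos h]
    ring
  · have hmem : x₂ ∉ closedBall x₁ ε := by rw [mem_closedBall, dist_comm]; exact h
    rw [Set.indicator_of_notMem hmem, if_neg h]
    ring

theorem stmt9 {M : Type*} [MetricSpace M] [MeasurableSpace M] [BorelSpace M]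
    [TopologicalSpace.SeparableSpace M]
    (ν : Measure M) [IsProbabilityMeasure ν] (ε Δ : ℝ) (hε : 0 ≤ ε) (hΔ : 0 ≤ Δ)
    (hAC : ∀ᵐ p ∂ν, ∀ c d : ℝ, 0 ≤ c →
      AbsolutelyContinuousOnIcc (fun r => (ν (closedBall p r)).toReal) c d) :
    (∫ x₁, ∫ x₂, idSucc ε Δ x₁ x₂ ∂ν ∂ν
        = (2 - (1 - Δ) * ∫ p, (ν (closedBall p ε)).toReal ∂ν) / (2 + 2 * Δ))
    ∧ (∀ m : ℝ, 0 ≤ m → m < 1 →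
        StrictAntiOn (fun t : ℝ => (2 - (1 - t) * m) / (2 + 2 * t)) (Set.Ici 0))
    ∧ (∀ t : ℝ, 0 ≤ t → t < 1 →
        StrictAntiOn (fun m : ℝ => (2 - (1 - t) * m) / (2 + 2 * t)) (Set.Icc 0 1)) := by
  have h1Δ : (0:ℝ) < 1 + Δ := by positivity
  -- measurability of the ball-measure function
  have hSC : SecondCountableTopology M := UniformSpace.secondCountable_of_separable M
  have hmeasb : Measurable fun x : M => ν (closedBall x ε) := by
    have hs : MeasurableSet {p : M × M | dist p.2 p.1 ≤ ε} :=
      measurableSet_le (measurable_dist.comp (measurable_snd.prodMk measurable_fst))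
        measurable_const
    have h := measurable_measure_prodMk_left (ν := ν) hs
    have heq : (fun x : M => ν (closedBall x ε))
        = fun x => ν (Prod.mk x ⁻¹' {p : M × M | dist p.2 p.1 ≤ ε}) := by
      funext x
      have : Prod.mk x ⁻¹' {p : M × M | dist p.2 p.1 ≤ ε} = closedBall x ε := by
        ext y; simp [mem_closedBall]
      rw [this]
    rw [heq]; exact h
  have hbint : Integrable (fun x : M => (ν (closedBall x ε)).toReal) ν := by
    refine ⟨(hmeasb.ennreal_toReal).aestronglyMeasurable, ?_⟩
    apply HasFiniteIntegral.of_bounded (C := 1)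
    filter_upwards with x
    rw [Real.norm_eq_abs, abs_of_nonneg ENNReal.toReal_nonneg]
    exact ENNReal.toReal_le_of_le_ofReal one_pos.le (by simpa using prob_le_one)
  have hinner : ∀ x₁ : M, ∫ x₂, idSucc ε Δ x₁ x₂ ∂ν
      = 1/(1+Δ) + (1/2 - 1/(1+Δ)) * (ν (closedBall x₁ ε)).toReal := by
    intro x₁
    simp_rw [idSucc_eq_aux ε Δ hε hΔ x₁]
    rw [integral_add (integrable_const _)
      (((integrable_const (1:ℝ)).indicator measurableSet_closedBall).const_mul _),
      MeasureTheory.integral_const_mul, integral_indicator_const (1:ℝ) measurableSet_closedBall]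
    simp [measureReal_def]
  refine ⟨?_, ?_, ?_⟩
  · simp_rw [hinner]
    rw [integral_add (integrable_const _) (hbint.const_mul _), MeasureTheory.integral_const_mul,
      integral_const]
    have h2Δ : (2:ℝ) + 2*Δ ≠ 0 := by positivity
    simp only [measureReal_def, measure_univ, ENNReal.toReal_one, smul_eq_mul, one_mul]
    field_simp
    ring
  · intro m hm0 hm1 a ha b hb hab
    simp only [Set.mem_Ici] at ha hb
    have hda : (0:ℝ) < 2 + 2*a := by linarith
    have hdb : (0:ℝ) < 2 + 2*b := by linarith
    simp only
    rw [div_lt_div_iff₀ hdb hda]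
    nlinarith [mul_pos (sub_pos.2 hab) (sub_pos.2 hm1)]
  · intro t ht0 ht1 a ha b hb hab
    have hd : (0:ℝ) < 2 + 2*t := by linarith
    simp only
    rw [div_lt_div_iff₀ hd hd]
    nlinarith [mul_pos (sub_pos.2 hab) (sub_pos.2 ht1)]
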